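/- Let Γ be a group acting properly discontinuously by isometries on a metric space X₀, let {A_α} be a Γ-invariant ε-separated family of closed subsets of X₀ whose components are permuted by Γ, and suppose the quotient of the union of the A_α by Γ has a path-connected component E. Then E equals the quotient of a single component A_α by its stabilizer Stab_Γ(A_α) in Γ. -/

import Mathlib

noncomputable section
open Metric Set

/-- `γ` restricted to `[a,b]` is a unit-speed (minimizing) geodesic segment. -/
def IsGeodesicOn {X : Type*} [MetricSpace X] (γ : ℝ → X) (a b : ℝ) : Prop :=
  a ≤ b ∧ ∀ s ∈ Set.Icc a b, ∀ t ∈ Set.Icc a b, dist (γ s) (γ t) = |s - t|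

/-- Every pair of points is joined by a geodesic segment. -/
def IsGeodesicSpace (X : Type*) [MetricSpace X] : Prop :=
  ∀ x y : X, ∃ γ : ℝ → X, IsGeodesicOn γ 0 (dist x y) ∧ γ 0 = x ∧ γ (dist x y) = y

/-- Comparison condition defining CAT spaces with model space `M`:
for any geodesic triangle and a comparison triangle in `M`, distances between
points on two sides issuing from a common vertex are bounded by the
corresponding distances in the comparison triangle. -/
def CATWith (M : Type*) [MetricSpace M] (X : Type*) [MetricSpace X] : Prop :=
  IsGeodesicSpace X ∧
  ∀ (p q r : X) (γ δ : ℝ → X),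
    IsGeodesicOn γ 0 (dist p q) → γ 0 = p → γ (dist p q) = q →
    IsGeodesicOn δ 0 (dist p r) → δ 0 = p → δ (dist p r) = r →
    ∀ (p' q' r' : M) (γ' δ' : ℝ → M),
      dist p' q' = dist p q → dist p' r' = dist p r → dist q' r' = dist q r →
      IsGeodesicOn γ' 0 (dist p q) → γ' 0 = p' → γ' (dist p q) = q' →
      IsGeodesicOn δ' 0 (dist p r) → δ' 0 = p' → δ' (dist p r) = r' →
      ∀ s ∈ Set.Icc (0:ℝ) (dist p q), ∀ t ∈ Set.Icc (0:ℝ) (dist p r),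
        dist (γ s) (δ t) ≤ dist (γ' s) (δ' t)

/-- A CAT(-1) space: comparison with the hyperbolic plane of curvature `-1`. -/
def CATMinusOne (X : Type*) [MetricSpace X] : Prop := CATWith UpperHalfPlane X

/-- A CAT(0) space: comparison with the Euclidean plane. -/
def CATZero (X : Type*) [MetricSpace X] : Prop := CATWith (EuclideanSpace ℝ (Fin 2)) X

/-- A subset is (geodesically) convex if it contains every geodesic segment
between any two of its points. -/
def GConvex {X : Type*} [MetricSpace X] (A : Set X) : Prop :=
  ∀ (γ : ℝ → X) (a b : ℝ), IsGeodesicOn γ a b → γ a ∈ A → γ b ∈ A →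
    ∀ t ∈ Set.Icc a b, γ t ∈ A

/-- Distance between two subsets: the infimum of distances between their points. -/
def setDist {X : Type*} [MetricSpace X] (A B : Set X) : ℝ :=
  sInf ((fun p : X × X => dist p.1 p.2) '' A ×ˢ B)

end

private lemma setDist_le' {X : Type*} [MetricSpace X] {A B : Set X} {a b : X}
    (ha : a ∈ A) (hb : b ∈ B) : setDist A B ≤ dist a b := by
  apply csInf_le
  · exact ⟨0, fun r hr => by obtain ⟨p, _, rfl⟩ := hr; exact dist_nonneg⟩
  · exact ⟨(a, b), ⟨ha, hb⟩, rfl⟩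

private lemma closed_biUnion_sep {X : Type*} [MetricSpace X] {ι : Type*} {A : ι → Set X}
    {ε : ℝ} (hε : 0 < ε) (hcl : ∀ α, IsClosed (A α))
    (hsep : ∀ α β, α ≠ β → ε ≤ setDist (A α) (A β)) (S : Set ι) :
    IsClosed (⋃ β ∈ S, A β) := by
  refine isClosed_of_closure_subset fun x hx => ?_
  obtain ⟨y, hy, hxy⟩ := Metric.mem_closure_iff.mp hx (ε / 3) (by linarith)
  obtain ⟨β, hβS, hyβ⟩ := by simpa using hy
  have hxβ : x ∈ closure (A β) := by
    rw [Metric.mem_closure_iff]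
    intro δ hδ
    obtain ⟨z, hz, hxz⟩ := Metric.mem_closure_iff.mp hx (min δ (ε / 3))
      (lt_min hδ (by linarith))
    obtain ⟨β', hβ'S, hzβ'⟩ := by simpa using hz
    have hββ' : β' = β := by
      by_contra h
      have h1 := hsep β' β h
      have h2 := setDist_le' hzβ' hyβ
      have h3 : dist z y ≤ dist z x + dist x y := dist_triangle z x y
      have h4 : dist z x < ε / 3 := lt_of_lt_of_le (by rwa [dist_comm]) (min_le_right _ _)
      linarith
    exact ⟨z, hββ' ▸ hzβ', lt_of_lt_of_le hxz (min_le_left _ _)⟩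
  rw [(hcl β).closure_eq] at hxβ
  exact Set.mem_biUnion hβS hxβ

/-- Let `Γ` act properly discontinuously by isometries on
`X₀` and let `{A α}` be a `Γ`-invariant `ε`-separated family of closed
path-connected subsets. Then every path-component `E` of `(⋃ α, A α)/Γ` is the
quotient of a single member `A α` by its stabilizer in `Γ`. -/
theorem statement10 {Γ : Type*} [Group Γ] {X₀ : Type*} [MetricSpace X₀]
    [MulAction Γ X₀] [ProperlyDiscontinuousSMul Γ X₀]
    (hiso : ∀ g : Γ, Isometry (fun x : X₀ => g • x))
    {ι : Type*} (A : ι → Set X₀) (ε : ℝ) (hε : 0 < ε)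
    (hcl : ∀ α, IsClosed (A α)) (hpc : ∀ α, IsPathConnected (A α))
    (hinv : ∀ (g : Γ) (α : ι), ∃ β, (fun x => g • x) '' A α = A β)
    (hsep : ∀ α β, α ≠ β → ε ≤ setDist (A α) (A β))
    (q : X₀ → Quotient (MulAction.orbitRel Γ X₀))
    (hq : q = Quotient.mk (MulAction.orbitRel Γ X₀))
    (E : Set (Quotient (MulAction.orbitRel Γ X₀)))
    (hE1 : E ⊆ q '' ⋃ α, A α) (hE2 : IsPathConnected E)
    (hE3 : ∀ E', IsPathConnected E' → E' ⊆ q '' ⋃ α, A α → E ⊆ E' → E' = E) :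
    ∃ α, q '' A α = E ∧
      ∀ x ∈ A α, ∀ y ∈ A α,
        (q x = q y ↔ ∃ g : Γ, (fun z => g • z) '' A α = A α ∧ g • x = y) := by
  -- basic facts about q
  have hqm : Topology.IsQuotientMap q := by rw [hq]; exact isQuotientMap_quot_mk
  have hqc : Continuous q := hqm.continuous
  have hqq : ∀ u v : X₀, q u = q v ↔ ∃ g : Γ, g • v = u := by
    subst hq
    intro u v
    constructor
    · intro h
      exact MulAction.mem_orbit_iff.mp (MulAction.orbitRel_apply.mp (Quotient.exact h))
    · intro h
      exact Quotient.sound (MulAction.orbitRel_apply.mpr (MulAction.mem_orbit_iff.mpr h))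
  -- members intersecting nontrivially are equal
  have hne : ∀ β β', ((A β) ∩ (A β')).Nonempty → β = β' := by
    rintro β β' ⟨z, hz, hz'⟩
    by_contra h
    have h1 := hsep β β' h
    have h2 := setDist_le' hz hz'
    rw [dist_self] at h2
    linarith
  -- pick a base point of E
  obtain ⟨e, he, -⟩ := id hE2
  obtain ⟨x0, hx0, hqx0⟩ := hE1 he
  obtain ⟨α, hx0α⟩ := Set.mem_iUnion.mp hx0
  refine ⟨α, ?_, ?_⟩
  · -- the orbit index set and saturation
    set S : Set ι := {β | ∃ g : Γ, (fun x => g • x) '' A α = A β} with hS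
    have hαS : α ∈ S := ⟨1, by simp [one_smul]⟩
    set T : Set X₀ := ⋃ β ∈ S, A β with hT
    have hTiff : ∀ x, x ∈ T ↔ ∃ g : Γ, ∃ a ∈ A α, g • a = x := by
      intro x
      constructor
      · intro hx
        obtain ⟨β, hβ, hxβ⟩ := by simpa [hT] using hx
        obtain ⟨g, hg⟩ := hβ
        rw [← hg] at hxβ
        obtain ⟨a, ha, hga⟩ := hxβ
        exact ⟨g, a, ha, hga⟩
      · rintro ⟨g, a, ha, rfl⟩
        obtain ⟨β, hβ⟩ := hinv g α
        refine Set.mem_biUnion (⟨g, hβ⟩ : β ∈ S) ?_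
        rw [← hβ]
        exact ⟨a, ha, rfl⟩
    -- S is closed under the action on indices
    have hSact : ∀ (g : Γ) (β : ι) (β' : ι), (fun x => g • x) '' A β = A β' → β ∈ S → β' ∈ S := by
      rintro g β β' him ⟨h, hh⟩
      refine ⟨g * h, ?_⟩
      rw [← him, ← hh, Set.image_image]
      simp [mul_smul]
    have hSact' : ∀ (g : Γ) (β : ι) (β' : ι), (fun x => g • x) '' A β = A β' → β' ∈ S → β ∈ S := by
      intro g β β' him hβ'
      have him' : (fun x => g⁻¹ • x) '' A β' = A β := by
        rw [← him, Set.image_image]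
        simp
      exact hSact g⁻¹ β' β him' hβ'
    -- the saturation of A α is T
    have hpre : q ⁻¹' (q '' A α) = T := by
      ext x
      simp only [Set.mem_preimage, Set.mem_image]
      constructor
      · rintro ⟨a, ha, hqa⟩
        obtain ⟨g, hg⟩ := (hqq a x).mp hqa
        exact (hTiff x).mpr ⟨g⁻¹, a, ha, by rw [← hg]; simp⟩
      · intro hx
        obtain ⟨g, a, ha, hga⟩ := (hTiff x).mp hx
        exact ⟨a, ha, ((hqq x a).mpr ⟨g, hga⟩).symm⟩
    set W : Set X₀ := ⋃ β ∈ Sᶜ, A β with hW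
    have hTW : ∀ x, x ∈ T → x ∈ W → False := by
      intro x hxT hxW
      obtain ⟨β, hβ, hxβ⟩ := by simpa [hT] using hxT
      obtain ⟨β', hβ', hxβ'⟩ := by simpa [hW] using hxW
      exact hβ' (hne β' β ⟨x, hxβ', hxβ⟩ ▸ hβ)
    -- saturation of W is W
    have hpreW : q ⁻¹' (q '' W) = W := by
      apply Set.Subset.antisymm
      · intro x hx
        obtain ⟨w, hw, hqw⟩ := hx
        obtain ⟨g, hg⟩ := (hqq w x).mp hqw
        obtain ⟨β, hβ, hwβ⟩ := by simpa [hW] using hw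
        obtain ⟨β', hβ'⟩ := hinv g⁻¹ β
        have hβ'S : β' ∈ Sᶜ := fun hc => hβ (hSact' g⁻¹ β β' hβ' hc)
        refine Set.mem_biUnion hβ'S ?_
        rw [← hβ']
        exact ⟨w, hwβ, by rw [← hg]; simp⟩
      · exact Set.subset_preimage_image q W
    -- both images are closed
    have hTcl : IsClosed T := closed_biUnion_sep hε hcl hsep S
    have hWcl : IsClosed W := closed_biUnion_sep hε hcl hsep Sᶜ
    have hC1cl : IsClosed (q '' A α) := hqm.isClosed_preimage.mp (by rw [hpre]; exact hTcl)
    have hC2cl : IsClosed (q '' W) := hqm.isClosed_preimage.mp (by rw [hpreW]; exact hWcl)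
    -- they are disjoint
    have hdisj : ∀ z, z ∈ q '' A α → z ∈ q '' W → False := by
      rintro z ⟨a, ha, rfl⟩ hz
      have haW : a ∈ W := by rw [← hpreW]; exact hz
      have haT : a ∈ T := Set.mem_biUnion hαS ha
      exact hTW a haT haW
    -- E is covered by the two closed sets
    have hcover : E ⊆ q '' A α ∪ q '' W := by
      intro z hz
      obtain ⟨x, hx, rfl⟩ := hE1 hz
      obtain ⟨β, hxβ⟩ := Set.mem_iUnion.mp hx
      by_cases hβ : β ∈ S
      · left
        have hxT : x ∈ q ⁻¹' (q '' A α) := by rw [hpre]; exact Set.mem_biUnion hβ hxβ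
        exact hxT
      · right
        exact ⟨x, Set.mem_biUnion hβ hxβ, rfl⟩
    -- connectedness: E avoids q '' W
    have hEsub : E ⊆ q '' A α := by
      have hpc' : IsPreconnected E := hE2.isConnected.isPreconnected
      by_contra hcon
      obtain ⟨w, hwE, hwC1⟩ := Set.not_subset.mp hcon
      have hwC2 : w ∈ q '' W := (hcover hwE).resolve_left hwC1
      have heC1 : e ∈ q '' A α := by
        rw [← hqx0]; exact Set.mem_image_of_mem q hx0α
      have := hpc' (q '' W)ᶜ (q '' A α)ᶜ hC2cl.isOpen_compl hC1cl.isOpen_compl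
        (fun z hz => (hcover hz).imp (fun h1 h2 => hdisj z h1 h2) (fun h2 h1 => hdisj z h1 h2))
        ⟨e, he, fun hc => hdisj e heC1 hc⟩ ⟨w, hwE, hwC1⟩
      obtain ⟨z, hzE, hz1, hz2⟩ := this
      exact (hcover hzE).elim hz2 hz1
    -- maximality: q '' A α ⊆ E
    have hC1pc : IsPathConnected (q '' A α) := (hpc α).image hqc
    have hsub2 : q '' A α ⊆ E := by
      have hU : IsPathConnected (E ∪ q '' A α) := by
        apply hE2.union hC1pc
        exact ⟨e, he, by rw [← hqx0]; exact Set.mem_image_of_mem q hx0α⟩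
      have := hE3 (E ∪ q '' A α) hU
        (Set.union_subset hE1 (Set.image_mono (Set.subset_iUnion A α)))
        Set.subset_union_left
      rw [← this]
      exact Set.subset_union_right
    exact Set.Subset.antisymm hsub2 hEsub
  · -- stabilizer description
    intro x hx y hy
    constructor
    · intro hxy
      obtain ⟨g, hg⟩ := (hqq x y).mp hxy
      refine ⟨g⁻¹, ?_, by rw [← hg]; simp⟩
      obtain ⟨β, hβ⟩ := hinv g⁻¹ α
      have hyβ : y ∈ A β := by
        rw [← hβ]
        exact ⟨x, hx, by rw [← hg]; simp⟩
      have : β = α := hne β α ⟨y, hyβ, hy⟩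
      rw [hβ, this]
    · rintro ⟨g, _, rfl⟩
      exact ((hqq (g • x) x).mpr ⟨g, rfl⟩).symm
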